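/- Let $\trianglelefteq$ be a partial order on a Coxeter group $W$ satisfying: (PO2) for all $w \in W$ and $s \in S$ with $w \triangleleft ws$ the interval $[w, ws]$ is $\{w, ws\}$; (PO3i) for $x,y \in W$ with $x \triangleleft xs$ and $y \trianglelefteq xs$, one has $ys \trianglelefteq xs$; (PO3ii) for $x,y$ with $xs \triangleleft x$ and $xs \trianglelefteq y$, one has $xs \trianglelefteq ys$; and (PO1) any $w$ and $ws$ are comparable. Then $(W, \trianglelefteq)$ is a directed poset: for any $u, v \in W$ there exists $z \in W$ with $u \trianglelefteq z$ and $v \trianglelefteq z$. -/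

import Mathlib

/-!
STATEMENT 3: a partial order `⊴` on a Coxeter group satisfying (PO1), (PO2), (PO3)
makes `(W, ⊴)` a directed poset.
-/

/-- **Directedness** (Lemma 7.9 of the paper). Let `⊴` (here `le`) be a partial order on a
Coxeter group `W` satisfying (PO1), (PO2), (PO3i), (PO3ii). Then any two elements of `W`
have a common upper bound. -/
theorem stmt3 {B W : Type*} [Group W] {M : CoxeterMatrix B} (cs : CoxeterSystem M W)
    (le : W → W → Prop)
    (hrefl : ∀ w, le w w)
    (htrans : ∀ u v w, le u v → le v w → le u w)
    (hantisymm : ∀ u v, le u v → le v u → u = v)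
    -- (PO1): `w` and `ws` are comparable for every simple reflection `s`
    (PO1 : ∀ (w : W) (i : B), le w (w * cs.simple i) ∨ le (w * cs.simple i) w)
    -- (PO2): if `w ⊲ ws` then the interval `[w, ws]` is `{w, ws}`
    (PO2 : ∀ (w : W) (i : B), (le w (w * cs.simple i) ∧ w ≠ w * cs.simple i) →
      ∀ z, le w z → le z (w * cs.simple i) → z = w ∨ z = w * cs.simple i)
    -- (PO3i): if `x ⊲ xs` and `y ⊴ xs` then `ys ⊴ xs`
    (PO3i : ∀ (x y : W) (i : B), (le x (x * cs.simple i) ∧ x ≠ x * cs.simple i) →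
      le y (x * cs.simple i) → le (y * cs.simple i) (x * cs.simple i))
    -- (PO3ii): if `xs ⊲ x` and `xs ⊴ y` then `xs ⊴ ys`
    (PO3ii : ∀ (x y : W) (i : B), (le (x * cs.simple i) x ∧ x * cs.simple i ≠ x) →
      le (x * cs.simple i) y → le (x * cs.simple i) (y * cs.simple i)) :
    ∀ u v : W, ∃ z : W, le u z ∧ le v z := by

  suffices h : ∀ n : ℕ, ∀ u v : W, cs.length u + cs.length v = n → ∃ z : W, le u z ∧ le v z by
    intro u v; exact h _ u v rfl
  intro n
  induction n using Nat.strong_induction_on with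
  | _ n ih =>
    -- key step: given a common upper bound of u and v*s, produce one for u and v
    have key : ∀ (u v : W) (i : B), (∃ z, le u z ∧ le (v * cs.simple i) z) →
        ∃ z, le u z ∧ le v z := by
      intro u v i ⟨z, hu, hv'⟩
      have hs1 : cs.simple i ≠ 1 := by
        intro h
        have h2 := cs.length_simple i
        rw [h, cs.length_one] at h2
        exact one_ne_zero h2.symm
      have hzz : z * cs.simple i ≠ z := fun h => hs1 (mul_eq_left.mp h)
      rcases PO1 z i with hcase | hcase
      · -- z ⊲ zs : take zs
        have hlt : le z (z * cs.simple i) ∧ z ≠ z * cs.simple i :=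
          ⟨hcase, fun h => hzz h.symm⟩
        refine ⟨z * cs.simple i, htrans _ _ _ hu hcase, ?_⟩
        have := PO3i z (v * cs.simple i) i hlt (htrans _ _ _ hv' hcase)
        rwa [mul_assoc, cs.simple_mul_simple_self, mul_one] at this
      · -- zs ⊲ z : take z, apply PO3i with x = z * s
        have hx : le (z * cs.simple i) (z * cs.simple i * cs.simple i) ∧
            z * cs.simple i ≠ z * cs.simple i * cs.simple i := by
          rw [mul_assoc, cs.simple_mul_simple_self, mul_one]
          exact ⟨hcase, hzz⟩
        refine ⟨z, hu, ?_⟩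
        have := PO3i (z * cs.simple i) (v * cs.simple i) i hx
          (by rwa [mul_assoc, cs.simple_mul_simple_self, mul_one])
        rwa [mul_assoc, cs.simple_mul_simple_self, mul_one,
          mul_assoc, cs.simple_mul_simple_self, mul_one] at this
    intro u v hn
    by_cases hv : v = 1
    · by_cases hu : u = 1
      · exact ⟨1, hu ▸ hrefl 1, hv ▸ hrefl 1⟩
      · obtain ⟨i, hi⟩ := cs.exists_rightDescent_of_ne_one hu
        have hi' : cs.length (u * cs.simple i) < cs.length u := hi
        have hlen : cs.length (u * cs.simple i) + cs.length v < n := by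
          omega
        obtain ⟨z, hz1, hz2⟩ := ih _ hlen (u * cs.simple i) v rfl
        obtain ⟨z', hz1', hz2'⟩ := key v u i ⟨z, hz2, hz1⟩
        exact ⟨z', hz2', hz1'⟩
    · obtain ⟨i, hi⟩ := cs.exists_rightDescent_of_ne_one hv
      have hi' : cs.length (v * cs.simple i) < cs.length v := hi
      have hlen : cs.length u + cs.length (v * cs.simple i) < n := by
        omega
      obtain ⟨z, hz1, hz2⟩ := ih _ hlen u (v * cs.simple i) rfl
      exact key u v i ⟨z, hz1, hz2⟩
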